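/- Let p ∈ P and I ⊆ P. Then φ_p ∈ C_I if and only if p belongs to the ideal ⟨I⟩ of P generated by I. -/

import Mathlib

universe u v

/-- A clone on `X`: a set of finitary operations (of each arity `n + 1 ≥ 1`)
containing all projections and closed under composition. -/
structure Clone (X : Type u) where
  carrier : ∀ n : ℕ, Set ((Fin (n + 1) → X) → X)
  proj_mem : ∀ (n : ℕ) (i : Fin (n + 1)), (fun x => x i) ∈ carrier n
  comp_mem : ∀ {m n : ℕ} (f : (Fin (m + 1) → X) → X)
      (g : Fin (m + 1) → (Fin (n + 1) → X) → X),
      f ∈ carrier m → (∀ i, g i ∈ carrier n) →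
      (fun x => f fun i => g i x) ∈ carrier n

namespace Clone

variable {X : Type u}

theorem carrier_injective : Function.Injective (Clone.carrier (X := X)) := by
  rintro ⟨c, _, _⟩ ⟨d, _, _⟩ h
  simpa using h

instance : PartialOrder (Clone X) where
  le C D := ∀ n, C.carrier n ⊆ D.carrier n
  le_refl _ _ := subset_rfl
  le_trans _ _ _ h₁ h₂ n := (h₁ n).trans (h₂ n)
  le_antisymm _ _ h₁ h₂ :=
    carrier_injective (funext fun n => subset_antisymm (h₁ n) (h₂ n))

instance : InfSet (Clone X) where
  sInf S :=
    { carrier := fun n => ⋂ C ∈ S, C.carrier n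
      proj_mem := fun n i => Set.mem_iInter₂.2 fun C _ => C.proj_mem n i
      comp_mem := fun f g hf hg => Set.mem_iInter₂.2 fun C hC =>
        C.comp_mem f g (Set.mem_iInter₂.1 hf C hC)
          fun i => Set.mem_iInter₂.1 (hg i) C hC }

/-- The lattice `Cl(X)` of all clones on `X` is a complete lattice
(with infima given by intersection). -/
instance : CompleteLattice (Clone X) :=
  completeLatticeOfInf (Clone X) (fun S =>
    ⟨fun C hC n _ hx => Set.mem_iInter₂.1 hx C hC,
     fun _ hD n _ hx => Set.mem_iInter₂.2 fun C hC => hD hC n hx⟩)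

/-- The clone generated by a family `F` of operations:
the smallest clone whose carrier contains `F`. -/
def cloneGen (F : ∀ n : ℕ, Set ((Fin (n + 1) → X) → X)) : Clone X :=
  sInf {C : Clone X | ∀ n, F n ⊆ C.carrier n}

end Clone

attribute [local instance] Classical.propDecidable

noncomputable section Construction

variable {X : Type u} {P : Type v} [SemilatticeSup P]
variable (e0 e1 e2 e4 : X) (Af : P → Set X)

/-- `A = X ∖ {0, 1, 2, 4}`. -/
def Aset : Set X := ({e0, e1, e2, e4} : Set X)ᶜ

/-- The unary function `φ_p`: the characteristic function of `A_p` on `A`,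
fixing `2` and sending `{0, 1, 4}` to `4`. -/
def phi (p : P) (x : X) : X :=
  if x ∈ Af p then e1
  else if x ∈ Aset e0 e1 e2 e4 then e0
  else if x = e2 then e2
  else e4

/-- The ternary function `m_p^{q₁,q₂}`. -/
def mOp (p q1 q2 : P) (x y z : X) : X :=
  if y = phi e0 e1 e2 e4 Af q1 x ∧ z = phi e0 e1 e2 e4 Af q2 x then
    phi e0 e1 e2 e4 Af p x
  else if (x = e2 ∨ y = e2 ∨ z = e2) ∧ y ≠ e1 ∧ y ≠ e4 ∧ z ≠ e1 ∧ z ≠ e4 then e2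
  else e4

/-- `φ_p` as a unary operation (member of arity-1 part of a clone). -/
def phi1 (p : P) : (Fin 1 → X) → X := fun x => phi e0 e1 e2 e4 Af p (x 0)

/-- `m_p^{q₁,q₂}` as a ternary operation. -/
def m3 (p q1 q2 : P) : (Fin 3 → X) → X :=
  fun x => mOp e0 e1 e2 e4 Af p q1 q2 (x 0) (x 1) (x 2)

/-- The family `Φ_Q = {φ_p : p ∈ Q}`, as a family of operations indexed by arity. -/
def PhiFam (Q : Set P) : ∀ n : ℕ, Set ((Fin (n + 1) → X) → X)
  | 0 => {f | ∃ p ∈ Q, f = phi1 e0 e1 e2 e4 Af p}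
  | _ + 1 => ∅

/-- The family `M = {m_p^{q₁,q₂} : p ≤ q₁ ∨ q₂}`, as a family of operations indexed by arity. -/
def MFam : ∀ n : ℕ, Set ((Fin (n + 1) → X) → X)
  | 2 => {f | ∃ p q1 q2 : P, p ≤ q1 ⊔ q2 ∧ f = m3 e0 e1 e2 e4 Af p q1 q2}
  | _ => ∅

/-- The clone `C = ⟨Φ ∪ M⟩`. -/
def CClone : Clone X :=
  Clone.cloneGen fun n => PhiFam e0 e1 e2 e4 Af Set.univ n ∪ MFam e0 e1 e2 e4 Af n

/-- A function depends on its `i`-th variable iff it takes different values on two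
tuples differing only in the `i`-th coordinate. -/
def DependsOnVar {n : ℕ} (t : (Fin n → X) → X) (i : Fin n) : Prop :=
  ∃ a b : Fin n → X, (∀ j, j ≠ i → a j = b j) ∧ t a ≠ t b

/-- A unary function is distracted iff it takes a value in `{2, 4}` somewhere on `A`. -/
def Distracted (f : X → X) : Prop :=
  ∃ a ∈ Aset e0 e1 e2 e4, f a = e2 ∨ f a = e4

/-- The unary function `X → X` corresponding to a unary operation. -/
def toFun1 (u : (Fin 1 → X) → X) : X → X := fun a => u fun _ => a

/-- An `n`-ary member of `C` is unspoilt iff some substitution of unary members of `C`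
into it yields an element of `Φ`. -/
def Unspoilt {n : ℕ} (t : (Fin (n + 1) → X) → X) : Prop :=
  ∃ ts : Fin (n + 1) → (Fin 1 → X) → X,
    (∀ i, ts i ∈ (CClone e0 e1 e2 e4 Af).carrier 0) ∧
    (fun x : Fin 1 → X => t fun i => ts i x) ∈ PhiFam e0 e1 e2 e4 Af Set.univ 0

/-- The family `S` of all spoilt members of `C`. -/
def SpoiltFam (n : ℕ) : Set ((Fin (n + 1) → X) → X) :=
  {t | t ∈ (CClone e0 e1 e2 e4 Af).carrier n ∧ ¬ Unspoilt e0 e1 e2 e4 Af t}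

/-- The clone `C_I = ⟨Φ_I ∪ M ∪ S⟩`. -/
def CI (I : Set P) : Clone X :=
  Clone.cloneGen fun n =>
    PhiFam e0 e1 e2 e4 Af I n ∪ MFam e0 e1 e2 e4 Af n ∪ SpoiltFam e0 e1 e2 e4 Af n

end Construction

/-- An ideal of a join-semilattice: a downward closed subset closed under finite joins. -/
def IsIdealP {P : Type v} [SemilatticeSup P] (I : Set P) : Prop :=
  (∀ p q : P, p ≤ q → q ∈ I → p ∈ I) ∧ ∀ p q : P, p ∈ I → q ∈ I → p ⊔ q ∈ I

/-- The ideal of `P` generated by a subset `I`. -/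
def idealGen {P : Type v} [SemilatticeSup P] (I : Set P) : Set P :=
  ⋂₀ {J : Set P | IsIdealP J ∧ I ⊆ J}


section AuxLemma7
set_option linter.unusedVariables false
set_option linter.unusedSectionVars false

attribute [local instance] Classical.propDecidable

/-! ### Generic clone-generation lemmas -/

theorem mem_cloneGen' {X : Type u} {F : ∀ n : ℕ, Set ((Fin (n + 1) → X) → X)} (n : ℕ) :
    F n ⊆ (Clone.cloneGen F).carrier n :=
  fun _t ht => Set.mem_iInter₂.2 fun _C hC => hC n ht

theorem cloneGen_le' {X : Type u} {F : ∀ n : ℕ, Set ((Fin (n + 1) → X) → X)} {D : Clone X}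
    (h : ∀ n, F n ⊆ D.carrier n) (n : ℕ) :
    (Clone.cloneGen F).carrier n ⊆ D.carrier n :=
  fun _t ht => Set.mem_iInter₂.1 ht D h

/-! ### Ideal lemmas -/

theorem isIdeal_idealGen {P : Type v} [SemilatticeSup P] (S : Set P) :
    IsIdealP (idealGen S) := by
  constructor
  · intro p q hpq hq
    exact Set.mem_sInter.2 fun J hJ => hJ.1.1 p q hpq (Set.mem_sInter.1 hq J hJ)
  · intro p q hp hq
    exact Set.mem_sInter.2 fun J hJ =>
      hJ.1.2 p q (Set.mem_sInter.1 hp J hJ) (Set.mem_sInter.1 hq J hJ)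

theorem subset_idealGen {P : Type v} [SemilatticeSup P] (S : Set P) : S ⊆ idealGen S :=
  fun _x hx => Set.mem_sInter.2 fun _J hJ => hJ.2 hx

theorem idealGen_le {P : Type v} [SemilatticeSup P] {S J : Set P}
    (hJ : IsIdealP J) (h : S ⊆ J) : idealGen S ⊆ J :=
  fun _x hx => Set.mem_sInter.1 hx J ⟨hJ, h⟩

variable {X : Type u} {P : Type v} [SemilatticeSup P]
variable (e0 e1 e2 e4 : X) (Af : P → Set X)

/-! ### Basic facts about `Aset` and `phi` -/

theorem A_nonempty [Infinite X] : (Aset e0 e1 e2 e4).Nonempty :=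
  (Set.toFinite ({e0, e1, e2, e4} : Set X)).infinite_compl.nonempty

theorem mem_A_ne {a : X} (ha : a ∈ Aset e0 e1 e2 e4) :
    a ≠ e0 ∧ a ≠ e1 ∧ a ≠ e2 ∧ a ≠ e4 := by
  simpa [Aset, not_or] using ha

theorem e2_notin_A : e2 ∉ Aset e0 e1 e2 e4 := by simp [Aset]

theorem e4_notin_A : e4 ∉ Aset e0 e1 e2 e4 := by simp [Aset]

theorem phi_of_mem {q : P} {a : X} (ha : a ∈ Af q) :
    phi e0 e1 e2 e4 Af q a = e1 := if_pos ha

theorem phi_of_A (hAf : ∀ p : P, Af p ⊆ Aset e0 e1 e2 e4)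
    {q : P} {a : X} (ha : a ∈ Aset e0 e1 e2 e4) (h : a ∉ Af q) :
    phi e0 e1 e2 e4 Af q a = e0 := by
  unfold phi; rw [if_neg h, if_pos ha]

theorem phi_A_val {q : P} {a : X} (ha : a ∈ Aset e0 e1 e2 e4) :
    phi e0 e1 e2 e4 Af q a = e0 ∨ phi e0 e1 e2 e4 Af q a = e1 := by
  by_cases h : a ∈ Af q
  · exact Or.inr (if_pos h)
  · left; unfold phi; rw [if_neg h, if_pos ha]

theorem phi_notA (hAf : ∀ p : P, Af p ⊆ Aset e0 e1 e2 e4)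
    {q : P} {x : X} (hx : x ∉ Aset e0 e1 e2 e4) :
    phi e0 e1 e2 e4 Af q x = if x = e2 then e2 else e4 := by
  unfold phi; rw [if_neg (fun h => hx (hAf q h)), if_neg hx]

theorem phi_e2 (hAf : ∀ p : P, Af p ⊆ Aset e0 e1 e2 e4) (q : P) :
    phi e0 e1 e2 e4 Af q e2 = e2 := by
  rw [phi_notA e0 e1 e2 e4 Af hAf (e2_notin_A e0 e1 e2 e4), if_pos rfl]

theorem phi_e4 (hAf : ∀ p : P, Af p ⊆ Aset e0 e1 e2 e4) (h24 : e2 ≠ e4) (q : P) :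
    phi e0 e1 e2 e4 Af q e4 = e4 := by
  rw [phi_notA e0 e1 e2 e4 Af hAf (e4_notin_A e0 e1 e2 e4), if_neg (Ne.symm h24)]

theorem phi_e0e1 (hAf : ∀ p : P, Af p ⊆ Aset e0 e1 e2 e4)
    (h02 : e0 ≠ e2) (h12 : e1 ≠ e2) {x : X} (hx : x = e0 ∨ x = e1) (q : P) :
    phi e0 e1 e2 e4 Af q x = e4 := by
  have hxA : x ∉ Aset e0 e1 e2 e4 := by
    rcases hx with rfl | rfl <;> simp [Aset]
  rw [phi_notA e0 e1 e2 e4 Af hAf hxA, if_neg (by rcases hx with rfl | rfl <;> assumption)]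

theorem phi_comp_phi_A (hAf : ∀ p : P, Af p ⊆ Aset e0 e1 e2 e4)
    (h02 : e0 ≠ e2) (h12 : e1 ≠ e2) {q r : P} {a : X} (ha : a ∈ Aset e0 e1 e2 e4) :
    phi e0 e1 e2 e4 Af q (phi e0 e1 e2 e4 Af r a) = e4 :=
  phi_e0e1 e0 e1 e2 e4 Af hAf h02 h12 (phi_A_val e0 e1 e2 e4 Af ha) q

theorem phi_inj (hAf : ∀ p : P, Af p ⊆ Aset e0 e1 e2 e4)
    (hcover : ∀ (p : P) (k : ℕ) (q : Fin k → P),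
      (∀ i, p ≠ q i) → ¬ Af p ⊆ ⋃ i, Af (q i))
    (h01 : e0 ≠ e1) {r s : P}
    (h : phi e0 e1 e2 e4 Af r = phi e0 e1 e2 e4 Af s) : r = s := by
  by_contra hne
  obtain ⟨a, haR, haN⟩ := Set.not_subset.1 (hcover r 1 (fun _ => s) (fun _ => hne))
  have haS : a ∉ Af s := fun hm => haN (Set.mem_iUnion.2 ⟨0, hm⟩)
  have h1 : phi e0 e1 e2 e4 Af r a = e1 := phi_of_mem e0 e1 e2 e4 Af haR
  rw [h, phi_of_A e0 e1 e2 e4 Af hAf (hAf r haR) haS] at h1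
  exact h01 h1

theorem not_dis_phi (h02 : e0 ≠ e2) (h04 : e0 ≠ e4) (h12 : e1 ≠ e2) (h14 : e1 ≠ e4) (q : P) :
    ¬ Distracted e0 e1 e2 e4 (phi e0 e1 e2 e4 Af q) := by
  rintro ⟨a, ha, hv⟩
  rcases phi_A_val e0 e1 e2 e4 Af (q := q) ha with h | h <;> rw [h] at hv <;>
    rcases hv with hv | hv
  · exact h02 hv
  · exact h04 hv
  · exact h12 hv
  · exact h14 hv

/-! ### The trichotomy predicate and composition analysis -/

/-- Every unary member of `C` is (as a function `X → X`) distracted, the identity,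
or some `phi q`. -/
def Tri (u : X → X) : Prop :=
  Distracted e0 e1 e2 e4 u ∨ u = (fun a => a) ∨ ∃ q : P, u = phi e0 e1 e2 e4 Af q

theorem Tri_comp_phi [Infinite X] (hAf : ∀ p : P, Af p ⊆ Aset e0 e1 e2 e4)
    (h02 : e0 ≠ e2) (h12 : e1 ≠ e2) (h24 : e2 ≠ e4) {u : X → X} (q : P)
    (hu : Tri e0 e1 e2 e4 Af u) :
    Tri e0 e1 e2 e4 Af (fun a => phi e0 e1 e2 e4 Af q (u a)) := by
  rcases hu with ⟨a, ha, h | h⟩ | rfl | ⟨s, rfl⟩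
  · exact Or.inl ⟨a, ha, Or.inl (by beta_reduce; rw [h, phi_e2 e0 e1 e2 e4 Af hAf])⟩
  · exact Or.inl ⟨a, ha, Or.inr (by beta_reduce; rw [h, phi_e4 e0 e1 e2 e4 Af hAf h24])⟩
  · exact Or.inr (Or.inr ⟨q, rfl⟩)
  · obtain ⟨a, ha⟩ := A_nonempty e0 e1 e2 e4 (X := X)
    exact Or.inl ⟨a, ha, Or.inr (phi_comp_phi_A e0 e1 e2 e4 Af hAf h02 h12 ha)⟩

theorem Tri_phi_cases [Infinite X] (hAf : ∀ p : P, Af p ⊆ Aset e0 e1 e2 e4)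
    (hcover : ∀ (p : P) (k : ℕ) (q : Fin k → P),
      (∀ i, p ≠ q i) → ¬ Af p ⊆ ⋃ i, Af (q i))
    (h01 : e0 ≠ e1) (h02 : e0 ≠ e2) (h04 : e0 ≠ e4) (h12 : e1 ≠ e2) (h14 : e1 ≠ e4)
    {u : X → X} (r : P) (hu : Tri e0 e1 e2 e4 Af u) :
    u = phi e0 e1 e2 e4 Af r ∨ ∃ a ∈ Aset e0 e1 e2 e4, u a ≠ phi e0 e1 e2 e4 Af r a := by
  rcases hu with ⟨a, ha, h | h⟩ | rfl | ⟨s, rfl⟩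
  · right; refine ⟨a, ha, fun hc => ?_⟩
    rw [h] at hc
    rcases phi_A_val e0 e1 e2 e4 Af (q := r) ha with h' | h' <;> rw [h'] at hc
    · exact h02 hc.symm
    · exact h12 hc.symm
  · right; refine ⟨a, ha, fun hc => ?_⟩
    rw [h] at hc
    rcases phi_A_val e0 e1 e2 e4 Af (q := r) ha with h' | h' <;> rw [h'] at hc
    · exact h04 hc.symm
    · exact h14 hc.symm
  · obtain ⟨a, ha⟩ := A_nonempty e0 e1 e2 e4 (X := X)
    right; refine ⟨a, ha, fun hc => ?_⟩
    rcases phi_A_val e0 e1 e2 e4 Af (q := r) ha with h' | h' <;> rw [h'] at hc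
    · exact (mem_A_ne e0 e1 e2 e4 ha).1 hc
    · exact (mem_A_ne e0 e1 e2 e4 ha).2.1 hc
  · by_cases hs : s = r
    · exact Or.inl (by rw [hs])
    · obtain ⟨a, haS, haN⟩ := Set.not_subset.1 (hcover s 1 (fun _ => r) (fun _ => hs))
      have haR : a ∉ Af r := fun hm => haN (Set.mem_iUnion.2 ⟨0, hm⟩)
      right
      refine ⟨a, hAf s haS, fun hc => ?_⟩
      rw [phi_of_mem e0 e1 e2 e4 Af haS,
        phi_of_A e0 e1 e2 e4 Af hAf (hAf s haS) haR] at hc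
      exact h01 hc.symm

theorem mOp_cases {p q1 q2 : P} {x y z : X} :
    mOp e0 e1 e2 e4 Af p q1 q2 x y z = phi e0 e1 e2 e4 Af p x ∨
    mOp e0 e1 e2 e4 Af p q1 q2 x y z = e2 ∨ mOp e0 e1 e2 e4 Af p q1 q2 x y z = e4 := by
  unfold mOp; split_ifs <;> simp

theorem mOp_of_ne {p q1 q2 : P} {x y z : X}
    (h : ¬(y = phi e0 e1 e2 e4 Af q1 x ∧ z = phi e0 e1 e2 e4 Af q2 x)) :
    mOp e0 e1 e2 e4 Af p q1 q2 x y z = e2 ∨ mOp e0 e1 e2 e4 Af p q1 q2 x y z = e4 := by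
  unfold mOp; rw [if_neg h]; split_ifs <;> simp

theorem m_analysis [Infinite X] (hAf : ∀ p : P, Af p ⊆ Aset e0 e1 e2 e4)
    (hcover : ∀ (p : P) (k : ℕ) (q : Fin k → P),
      (∀ i, p ≠ q i) → ¬ Af p ⊆ ⋃ i, Af (q i))
    (h01 : e0 ≠ e1) (h02 : e0 ≠ e2) (h04 : e0 ≠ e4) (h12 : e1 ≠ e2) (h14 : e1 ≠ e4)
    (h24 : e2 ≠ e4)
    {p q1 q2 : P} {u1 u2 u3 : X → X}
    (hu1 : Tri e0 e1 e2 e4 Af u1) (hu2 : Tri e0 e1 e2 e4 Af u2)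
    (hu3 : Tri e0 e1 e2 e4 Af u3) :
    Distracted e0 e1 e2 e4
      (fun a => mOp e0 e1 e2 e4 Af p q1 q2 (u1 a) (u2 a) (u3 a)) ∨
    (u1 = (fun a => a) ∧ u2 = phi e0 e1 e2 e4 Af q1 ∧ u3 = phi e0 e1 e2 e4 Af q2 ∧
      (fun a => mOp e0 e1 e2 e4 Af p q1 q2 (u1 a) (u2 a) (u3 a)) = phi e0 e1 e2 e4 Af p) := by
  have val24 : ∀ a : X, (u1 a = e2 ∨ u1 a = e4) →
      mOp e0 e1 e2 e4 Af p q1 q2 (u1 a) (u2 a) (u3 a) = e2 ∨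
      mOp e0 e1 e2 e4 Af p q1 q2 (u1 a) (u2 a) (u3 a) = e4 := by
    intro a hv
    rcases mOp_cases e0 e1 e2 e4 Af
      (p := p) (q1 := q1) (q2 := q2) (x := u1 a) (y := u2 a) (z := u3 a) with h | h | h
    · rw [h]
      rcases hv with h' | h' <;> rw [h']
      · exact Or.inl (phi_e2 e0 e1 e2 e4 Af hAf p)
      · exact Or.inr (phi_e4 e0 e1 e2 e4 Af hAf h24 p)
    · exact Or.inl h
    · exact Or.inr h
  rcases hu1 with ⟨a, ha, hv⟩ | rfl | ⟨s, rfl⟩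
  · exact Or.inl ⟨a, ha, val24 a hv⟩
  · rcases Tri_phi_cases e0 e1 e2 e4 Af hAf hcover h01 h02 h04 h12 h14 q1 hu2 with
      h2 | ⟨a, ha, hne⟩
    · rcases Tri_phi_cases e0 e1 e2 e4 Af hAf hcover h01 h02 h04 h12 h14 q2 hu3 with
        h3 | ⟨a, ha, hne⟩
      · refine Or.inr ⟨rfl, h2, h3, ?_⟩
        subst h2; subst h3
        funext a
        exact if_pos ⟨rfl, rfl⟩
      · exact Or.inl ⟨a, ha, mOp_of_ne e0 e1 e2 e4 Af (fun hc => hne hc.2)⟩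
    · exact Or.inl ⟨a, ha, mOp_of_ne e0 e1 e2 e4 Af (fun hc => hne hc.1)⟩
  · obtain ⟨a, ha⟩ := A_nonempty e0 e1 e2 e4 (X := X)
    left
    refine ⟨a, ha, ?_⟩
    beta_reduce
    rcases mOp_cases e0 e1 e2 e4 Af
      (p := p) (q1 := q1) (q2 := q2) (x := phi e0 e1 e2 e4 Af s a) (y := u2 a) (z := u3 a)
      with h | h | h
    · rw [h]; exact Or.inr (phi_comp_phi_A e0 e1 e2 e4 Af hAf h02 h12 ha)
    · exact Or.inl h
    · exact Or.inr h

/-! ### The clone of trichotomy-preserving operations -/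

def DClone : Clone X where
  carrier n := {t | ∀ us : Fin (n + 1) → (X → X),
    (∀ i, Tri e0 e1 e2 e4 Af (us i)) →
    Tri e0 e1 e2 e4 Af (fun a => t (fun i => us i a))}
  proj_mem n i := fun us h => h i
  comp_mem f g hf hg := fun us h =>
    hf (fun j a => g j (fun i => us i a)) (fun j => hg j us h)

theorem CClone_le_DClone [Infinite X] (hAf : ∀ p : P, Af p ⊆ Aset e0 e1 e2 e4)
    (hcover : ∀ (p : P) (k : ℕ) (q : Fin k → P),
      (∀ i, p ≠ q i) → ¬ Af p ⊆ ⋃ i, Af (q i))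
    (h01 : e0 ≠ e1) (h02 : e0 ≠ e2) (h04 : e0 ≠ e4) (h12 : e1 ≠ e2) (h14 : e1 ≠ e4)
    (h24 : e2 ≠ e4) (n : ℕ) :
    (CClone e0 e1 e2 e4 Af).carrier n ⊆ (DClone e0 e1 e2 e4 Af (X := X)).carrier n := by
  refine cloneGen_le' (fun m t ht => ?_) n
  rcases m with _ | _ | _ | k
  · rcases ht with ⟨q, -, rfl⟩ | hm
    · intro us h
      exact Tri_comp_phi e0 e1 e2 e4 Af hAf h02 h12 h24 q (h 0)
    · exact absurd hm (by simp [MFam])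
  · rcases ht with hm | hm
    · exact absurd hm (by simp [PhiFam])
    · exact absurd hm (by simp [MFam])
  · rcases ht with hm | ⟨p, q1, q2, hle, rfl⟩
    · exact absurd hm (by simp [PhiFam])
    · intro us h
      rcases m_analysis e0 e1 e2 e4 Af hAf hcover h01 h02 h04 h12 h14 h24
        (p := p) (q1 := q1) (q2 := q2) (h 0) (h 1) (h 2) with hD | ⟨-, -, -, hv⟩
      · exact Or.inl hD
      · exact Or.inr (Or.inr ⟨p, hv⟩)
  · rcases ht with hm | hm
    · exact absurd hm (by simp [PhiFam])
    · exact absurd hm (by simp [MFam])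

theorem unary_C_Tri [Infinite X] (hAf : ∀ p : P, Af p ⊆ Aset e0 e1 e2 e4)
    (hcover : ∀ (p : P) (k : ℕ) (q : Fin k → P),
      (∀ i, p ≠ q i) → ¬ Af p ⊆ ⋃ i, Af (q i))
    (h01 : e0 ≠ e1) (h02 : e0 ≠ e2) (h04 : e0 ≠ e4) (h12 : e1 ≠ e2) (h14 : e1 ≠ e4)
    (h24 : e2 ≠ e4) {u : (Fin 1 → X) → X}
    (hu : u ∈ (CClone e0 e1 e2 e4 Af).carrier 0) :
    Tri e0 e1 e2 e4 Af (toFun1 u) :=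
  CClone_le_DClone e0 e1 e2 e4 Af hAf hcover h01 h02 h04 h12 h14 h24 0 hu
    (fun _ => fun a => a) (fun _ => Or.inr (Or.inl rfl))

/-! ### The invariant clone for `C_I` -/

/-- The parameters `r` such that some substituted unary function is exactly `phi r`. -/
def QSet {k : ℕ} (us : Fin k → ((Fin 1 → X) → X)) : Set P :=
  {r | ∃ i, toFun1 (us i) = phi e0 e1 e2 e4 Af r}

/-- The invariant describing members of `C_I`. -/
def GoodI (I : Set P) (n : ℕ) (t : (Fin (n + 1) → X) → X) : Prop :=
  ∀ us : Fin (n + 1) → ((Fin 1 → X) → X),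
    (∀ i, us i ∈ (CClone e0 e1 e2 e4 Af).carrier 0) →
    (∀ i, Tri e0 e1 e2 e4 Af (toFun1 (us i))) →
    Distracted e0 e1 e2 e4 (fun a => t fun i => toFun1 (us i) a) ∨
    (∃ i, (fun a => t fun i => toFun1 (us i) a) = toFun1 (us i)) ∨
    ∃ q, (fun a => t fun i => toFun1 (us i) a) = phi e0 e1 e2 e4 Af q ∧
      q ∈ idealGen (I ∪ QSet e0 e1 e2 e4 Af us)

def DI (hAf : ∀ p : P, Af p ⊆ Aset e0 e1 e2 e4)
    (hcover : ∀ (p : P) (k : ℕ) (q : Fin k → P),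
      (∀ i, p ≠ q i) → ¬ Af p ⊆ ⋃ i, Af (q i))
    (h01 : e0 ≠ e1) (h02 : e0 ≠ e2) (h04 : e0 ≠ e4) (h12 : e1 ≠ e2) (h14 : e1 ≠ e4)
    (I : Set P) : Clone X where
  carrier n := {t | t ∈ (CClone e0 e1 e2 e4 Af).carrier n ∧ GoodI e0 e1 e2 e4 Af I n t}
  proj_mem n i :=
    ⟨(CClone e0 e1 e2 e4 Af).proj_mem n i, fun us _hC _hT => Or.inr (Or.inl ⟨i, rfl⟩)⟩
  comp_mem {m n} f g hf hg := by
    refine ⟨(CClone e0 e1 e2 e4 Af).comp_mem f g hf.1 (fun i => (hg i).1), ?_⟩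
    intro us hC hT
    set ws : Fin (m + 1) → ((Fin 1 → X) → X) :=
      fun j => fun x => g j (fun i => us i x) with hws
    have hwsC : ∀ j, ws j ∈ (CClone e0 e1 e2 e4 Af).carrier 0 :=
      fun j => (CClone e0 e1 e2 e4 Af).comp_mem (g j) us (hg j).1 hC
    have hP : ∀ j,
        Distracted e0 e1 e2 e4 (fun a => g j fun i => toFun1 (us i) a) ∨
        (∃ i, (fun a => g j fun i => toFun1 (us i) a) = toFun1 (us i)) ∨
        ∃ q, (fun a => g j fun i => toFun1 (us i) a) = phi e0 e1 e2 e4 Af q ∧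
          q ∈ idealGen (I ∪ QSet e0 e1 e2 e4 Af us) :=
      fun j => (hg j).2 us hC hT
    have hwsT : ∀ j, Tri e0 e1 e2 e4 Af (toFun1 (ws j)) := by
      intro j
      show Tri e0 e1 e2 e4 Af (fun a => g j fun i => toFun1 (us i) a)
      rcases hP j with h | ⟨i, h⟩ | ⟨q, h, -⟩
      · exact Or.inl h
      · rw [h]; exact hT i
      · rw [h]; exact Or.inr (Or.inr ⟨q, rfl⟩)
    rcases hf.2 ws hwsC hwsT with h | ⟨j, h⟩ | ⟨q, h, hq⟩
    · exact Or.inl h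
    · -- h : composite = toFun1 (ws j)
      rcases hP j with h' | ⟨i, h'⟩ | ⟨q, h', hq⟩
      · left
        obtain ⟨a, ha, hv⟩ := h'
        have hpt : (fun a => f fun j => toFun1 (ws j) a) a =
            (fun a => g j fun i => toFun1 (us i) a) a := congrFun h a
        rcases hv with hv | hv
        · exact ⟨a, ha, Or.inl (hpt.trans hv)⟩
        · exact ⟨a, ha, Or.inr (hpt.trans hv)⟩
      · exact Or.inr (Or.inl ⟨i, h.trans h'⟩)
      · exact Or.inr (Or.inr ⟨q, h.trans h', hq⟩)
    · refine Or.inr (Or.inr ⟨q, h, ?_⟩)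
      have hsub : I ∪ QSet e0 e1 e2 e4 Af ws ⊆ idealGen (I ∪ QSet e0 e1 e2 e4 Af us) := by
        rintro r (hr | ⟨j, hj⟩)
        · exact subset_idealGen _ (Or.inl hr)
        · rcases hP j with h' | ⟨i, h'⟩ | ⟨q', h', hq'⟩
          · exfalso
            obtain ⟨a, ha, hv⟩ := h'
            have hpt : (fun a => g j fun i => toFun1 (us i) a) a =
                phi e0 e1 e2 e4 Af r a := congrFun hj a
            refine not_dis_phi e0 e1 e2 e4 Af h02 h04 h12 h14 r ⟨a, ha, ?_⟩
            rcases hv with hv | hv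
            · exact Or.inl (hpt.symm.trans hv)
            · exact Or.inr (hpt.symm.trans hv)
          · exact subset_idealGen _ (Or.inr ⟨i, h'.symm.trans hj⟩)
          · have : q' = r :=
              phi_inj e0 e1 e2 e4 Af hAf hcover h01 (h'.symm.trans hj)
            exact this ▸ hq'
      exact idealGen_le (isIdeal_idealGen _) hsub hq

theorem spoilt_mem_DI [Infinite X] (hAf : ∀ p : P, Af p ⊆ Aset e0 e1 e2 e4)
    (hcover : ∀ (p : P) (k : ℕ) (q : Fin k → P),
      (∀ i, p ≠ q i) → ¬ Af p ⊆ ⋃ i, Af (q i))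
    (h01 : e0 ≠ e1) (h02 : e0 ≠ e2) (h04 : e0 ≠ e4) (h12 : e1 ≠ e2) (h14 : e1 ≠ e4)
    (h24 : e2 ≠ e4) (q0 : P) (I : Set P) (n : ℕ) {t : (Fin (n + 1) → X) → X}
    (ht : t ∈ SpoiltFam e0 e1 e2 e4 Af n) :
    t ∈ (DI e0 e1 e2 e4 Af hAf hcover h01 h02 h04 h12 h14 I).carrier n := by
  obtain ⟨htC, htN⟩ := ht
  refine ⟨htC, ?_⟩
  intro us hC hT
  have hw : (fun x => t fun i => us i x) ∈ (CClone e0 e1 e2 e4 Af).carrier 0 :=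
    (CClone e0 e1 e2 e4 Af).comp_mem t us htC hC
  have hTri := unary_C_Tri e0 e1 e2 e4 Af hAf hcover h01 h02 h04 h12 h14 h24 hw
  rcases hTri with hD | hid | ⟨q, hq⟩
  · exact Or.inl hD
  · exfalso
    apply htN
    refine ⟨fun i => fun x => us i fun _ => phi1 e0 e1 e2 e4 Af q0 x,
      fun i => (CClone e0 e1 e2 e4 Af).comp_mem (us i) (fun _ => phi1 e0 e1 e2 e4 Af q0)
        (hC i) (fun _ => mem_cloneGen' 0 (Or.inl ⟨q0, Set.mem_univ q0, rfl⟩)), ?_⟩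
    exact ⟨q0, Set.mem_univ q0, funext fun x => congrFun hid (phi1 e0 e1 e2 e4 Af q0 x)⟩
  · exfalso
    apply htN
    refine ⟨us, hC, q, Set.mem_univ q, funext fun x => ?_⟩
    have hx : x = fun _ => x 0 := funext fun j => by rw [Subsingleton.elim j 0]
    exact (congrArg t (funext fun i => congrArg (us i) hx)).trans (congrFun hq (x 0))

theorem CI_le_DI [Infinite X] (hAf : ∀ p : P, Af p ⊆ Aset e0 e1 e2 e4)
    (hcover : ∀ (p : P) (k : ℕ) (q : Fin k → P),
      (∀ i, p ≠ q i) → ¬ Af p ⊆ ⋃ i, Af (q i))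
    (h01 : e0 ≠ e1) (h02 : e0 ≠ e2) (h04 : e0 ≠ e4) (h12 : e1 ≠ e2) (h14 : e1 ≠ e4)
    (h24 : e2 ≠ e4) (q0 : P) (I : Set P) (n : ℕ) :
    (CI e0 e1 e2 e4 Af I).carrier n ⊆
      (DI e0 e1 e2 e4 Af hAf hcover h01 h02 h04 h12 h14 I).carrier n := by
  refine cloneGen_le' (fun m t ht => ?_) n
  rcases ht with (hphi | hm) | hs
  · rcases m with _ | m
    · obtain ⟨r, hrI, rfl⟩ := hphi
      refine ⟨mem_cloneGen' 0 (Or.inl ⟨r, Set.mem_univ r, rfl⟩), ?_⟩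
      intro us hC hT
      rcases hT 0 with hD | hid | ⟨s, hs⟩
      · obtain ⟨a, ha, hv⟩ := hD
        left
        refine ⟨a, ha, ?_⟩
        show phi e0 e1 e2 e4 Af r (toFun1 (us 0) a) = e2 ∨
          phi e0 e1 e2 e4 Af r (toFun1 (us 0) a) = e4
        rcases hv with hv | hv <;> rw [hv]
        · exact Or.inl (phi_e2 e0 e1 e2 e4 Af hAf r)
        · exact Or.inr (phi_e4 e0 e1 e2 e4 Af hAf h24 r)
      · right; right
        refine ⟨r, ?_, subset_idealGen _ (Or.inl hrI)⟩
        funext a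
        show phi e0 e1 e2 e4 Af r (toFun1 (us 0) a) = phi e0 e1 e2 e4 Af r a
        rw [congrFun hid a]
      · left
        obtain ⟨a, ha⟩ := A_nonempty e0 e1 e2 e4 (X := X)
        refine ⟨a, ha, Or.inr ?_⟩
        show phi e0 e1 e2 e4 Af r (toFun1 (us 0) a) = e4
        rw [congrFun hs a]
        exact phi_comp_phi_A e0 e1 e2 e4 Af hAf h02 h12 ha
    · exact absurd hphi (by simp [PhiFam])
  · rcases m with _ | _ | _ | k
    · exact absurd hm (by simp [MFam])
    · exact absurd hm (by simp [MFam])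
    · obtain ⟨p, q1, q2, hle, rfl⟩ := hm
      refine ⟨mem_cloneGen' 2 (Or.inr ⟨p, q1, q2, hle, rfl⟩), ?_⟩
      intro us hC hT
      rcases m_analysis e0 e1 e2 e4 Af hAf hcover h01 h02 h04 h12 h14 h24
        (p := p) (q1 := q1) (q2 := q2) (hT 0) (hT 1) (hT 2) with hD | ⟨-, h2, h3, hv⟩
      · exact Or.inl hD
      · right; right
        refine ⟨p, hv, ?_⟩
        have hq1 : q1 ∈ idealGen (I ∪ QSet e0 e1 e2 e4 Af us) :=
          subset_idealGen _ (Or.inr ⟨1, h2⟩)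
        have hq2 : q2 ∈ idealGen (I ∪ QSet e0 e1 e2 e4 Af us) :=
          subset_idealGen _ (Or.inr ⟨2, h3⟩)
        exact (isIdeal_idealGen _).1 p (q1 ⊔ q2) hle
          ((isIdeal_idealGen _).2 q1 q2 hq1 hq2)
    · exact absurd hm (by simp [MFam])
  · exact spoilt_mem_DI e0 e1 e2 e4 Af hAf hcover h01 h02 h04 h12 h14 h24 q0 I m hs

/-! ### The easy direction: closure properties of `{q | φ_q ∈ C_I}` -/

theorem phi1_mem_of_le {I : Set P} {p q1 q2 : P} (hle : p ≤ q1 ⊔ q2)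
    (h1 : phi1 e0 e1 e2 e4 Af q1 ∈ (CI e0 e1 e2 e4 Af I).carrier 0)
    (h2 : phi1 e0 e1 e2 e4 Af q2 ∈ (CI e0 e1 e2 e4 Af I).carrier 0) :
    phi1 e0 e1 e2 e4 Af p ∈ (CI e0 e1 e2 e4 Af I).carrier 0 := by
  have hm : m3 e0 e1 e2 e4 Af p q1 q2 ∈ (CI e0 e1 e2 e4 Af I).carrier 2 :=
    mem_cloneGen' 2 (Or.inl (Or.inr ⟨p, q1, q2, hle, rfl⟩))
  have hproj : (fun x : Fin 1 → X => x 0) ∈ (CI e0 e1 e2 e4 Af I).carrier 0 :=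
    (CI e0 e1 e2 e4 Af I).proj_mem 0 0
  have hg : ∀ j : Fin 3,
      ![fun x : Fin 1 → X => x 0, phi1 e0 e1 e2 e4 Af q1, phi1 e0 e1 e2 e4 Af q2] j ∈
        (CI e0 e1 e2 e4 Af I).carrier 0 := by
    intro j
    fin_cases j
    · exact hproj
    · exact h1
    · exact h2
  have hcomp := (CI e0 e1 e2 e4 Af I).comp_mem (m3 e0 e1 e2 e4 Af p q1 q2)
    ![fun x : Fin 1 → X => x 0, phi1 e0 e1 e2 e4 Af q1, phi1 e0 e1 e2 e4 Af q2] hm hg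
  have heq : (fun x : Fin 1 → X => m3 e0 e1 e2 e4 Af p q1 q2 fun i =>
      ![fun x : Fin 1 → X => x 0, phi1 e0 e1 e2 e4 Af q1, phi1 e0 e1 e2 e4 Af q2] i x) =
      phi1 e0 e1 e2 e4 Af p := by
    funext x
    show mOp e0 e1 e2 e4 Af p q1 q2 (x 0) (phi e0 e1 e2 e4 Af q1 (x 0))
      (phi e0 e1 e2 e4 Af q2 (x 0)) = phi e0 e1 e2 e4 Af p (x 0)
    exact if_pos ⟨rfl, rfl⟩
  rw [heq] at hcomp
  exact hcomp

end AuxLemma7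

/-- Lemma 7: `φ_p ∈ C_I` iff `p` lies in the ideal of `P` generated by `I`. -/
theorem phi_mem_CI_iff
    {X : Type u} {P : Type v} [Infinite X] [SemilatticeSup P]
    (e0 e1 e2 e4 : X)
    (hdist : e0 ≠ e1 ∧ e0 ≠ e2 ∧ e0 ≠ e4 ∧ e1 ≠ e2 ∧ e1 ≠ e4 ∧ e2 ≠ e4)
    (hcard : Cardinal.lift.{u} (Cardinal.mk P) ≤ Cardinal.lift.{v} (2 ^ Cardinal.mk X))
    (Af : P → Set X) (hAf : ∀ p : P, Af p ⊆ Aset e0 e1 e2 e4)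
    (hcover : ∀ (p : P) (k : ℕ) (q : Fin k → P),
      (∀ i, p ≠ q i) → ¬ Af p ⊆ ⋃ i, Af (q i))
    (p : P) (I : Set P) :
    phi1 e0 e1 e2 e4 Af p ∈ (CI e0 e1 e2 e4 Af I).carrier 0 ↔ p ∈ idealGen I := by
  obtain ⟨h01, h02, h04, h12, h14, h24⟩ := hdist
  constructor
  · intro h
    obtain ⟨-, hG⟩ :=
      CI_le_DI e0 e1 e2 e4 Af hAf hcover h01 h02 h04 h12 h14 h24 p I 0 h
    obtain ⟨a0, ha0⟩ := A_nonempty e0 e1 e2 e4 (X := X)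
    have hmain := hG (fun _ => fun x => x 0)
      (fun _ => (CClone e0 e1 e2 e4 Af).proj_mem 0 0)
      (fun _ => Or.inr (Or.inl rfl))
    rcases hmain with hD | ⟨i, hid⟩ | ⟨q, hq, hqI⟩
    · exfalso
      obtain ⟨a, ha, hv⟩ := hD
      have hv' : phi e0 e1 e2 e4 Af p a = e2 ∨ phi e0 e1 e2 e4 Af p a = e4 := hv
      rcases phi_A_val e0 e1 e2 e4 Af (q := p) ha with h' | h' <;> rw [h'] at hv'
      · rcases hv' with hv' | hv'
        exacts [absurd hv' h02, absurd hv' h04]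
      · rcases hv' with hv' | hv'
        exacts [absurd hv' h12, absurd hv' h14]
    · exfalso
      have hpa : phi e0 e1 e2 e4 Af p a0 = a0 := congrFun hid a0
      rcases phi_A_val e0 e1 e2 e4 Af (q := p) ha0 with h' | h'
      · exact (mem_A_ne e0 e1 e2 e4 ha0).1 (hpa.symm.trans h')
      · exact (mem_A_ne e0 e1 e2 e4 ha0).2.1 (hpa.symm.trans h')
    · have hq' : phi e0 e1 e2 e4 Af p = phi e0 e1 e2 e4 Af q := hq
      have hpq : p = q := phi_inj e0 e1 e2 e4 Af hAf hcover h01 hq'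
      have hsub : I ∪ QSet e0 e1 e2 e4 Af
          (fun _ : Fin 1 => fun x : Fin 1 → X => x 0) ⊆ idealGen I := by
        rintro r (hr | ⟨i, hi⟩)
        · exact subset_idealGen I hr
        · exfalso
          have hra : a0 = phi e0 e1 e2 e4 Af r a0 := congrFun hi a0
          rcases phi_A_val e0 e1 e2 e4 Af (q := r) ha0 with h' | h'
          · exact (mem_A_ne e0 e1 e2 e4 ha0).1 (hra.trans h')
          · exact (mem_A_ne e0 e1 e2 e4 ha0).2.1 (hra.trans h')
      rw [hpq]
      exact idealGen_le (isIdeal_idealGen I) hsub hqI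
  · intro hp
    have hJ : IsIdealP {q : P | phi1 e0 e1 e2 e4 Af q ∈ (CI e0 e1 e2 e4 Af I).carrier 0} := by
      constructor
      · intro a b hab hb
        exact phi1_mem_of_le e0 e1 e2 e4 Af (le_trans hab le_sup_left : a ≤ b ⊔ b) hb hb
      · intro a b ha hb
        exact phi1_mem_of_le e0 e1 e2 e4 Af le_rfl ha hb
    exact idealGen_le hJ
      (fun q hq => mem_cloneGen' 0 (Or.inl (Or.inl ⟨q, hq, rfl⟩))) hp
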